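/- Depth-one normal form: let F be a first-order formula with counting quantifiers of quantifier depth at most one, of counting degree at most k, with FV(F) ⊆ {x₁,…,xₙ}. Then F is logically equivalent to a finite disjunction of k-counting-star formulas F_C with FV(F_C) = {x₁,…,xₙ}. -/

import Mathlib

/-- An environment (model with variable assignment): interprets unary predicate
symbols from `𝒜`, binary predicate symbols from `ℱ`, and variables from `V`
over the domain `D`. -/
structure Env (𝒜 ℱ V D : Type) where
  un : 𝒜 → D → Prop
  bin : ℱ → D → D → Prop
  var : V → D

variable {𝒜 ℱ V D : Type}

/-- `e.Split e₁ e₂`: the relations of `e` split as a disjoint union into `e₁`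
and `e₂`, and the variable assignments agree with those of `e`. -/
def Env.Split (e e₁ e₂ : Env 𝒜 ℱ V D) : Prop :=
  e₁.var = e.var ∧ e₂.var = e.var ∧
  (∀ A d, (e.un A d ↔ (e₁.un A d ∨ e₂.un A d)) ∧ ¬(e₁.un A d ∧ e₂.un A d)) ∧
  (∀ f d₁ d₂, (e.bin f d₁ d₂ ↔ (e₁.bin f d₁ d₂ ∨ e₂.bin f d₁ d₂)) ∧
      ¬(e₁.bin f d₁ d₂ ∧ e₂.bin f d₁ d₂))

/-- Spatial conjunction of predicates on environments. -/
def spand (P Q : Env 𝒜 ℱ V D → Prop) (e : Env 𝒜 ℱ V D) : Prop :=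
  ∃ e₁ e₂, e.Split e₁ e₂ ∧ P e₁ ∧ Q e₂

/-! ## Syntax and semantics of first-order logic with counting quantifiers -/

/-- Counting quantifier specifications: `∃^{=k}` and `∃^{≥k}`. -/
inductive CQ : Type where
  | exact : ℕ → CQ
  | atLeast : ℕ → CQ
deriving DecidableEq

/-- A counting quantifier specification is satisfied by a cardinality `c`. -/
def CQ.sat : CQ → ℕ → Prop
  | .exact k, c => c = k
  | .atLeast k, c => k ≤ c

/-- `c ∈ C_{k+1}`: `c` is `=i` for some `i ≤ k`, or `≥ k+1`. -/
def CQ.degLE (k : ℕ) : CQ → Prop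
  | .exact i => i ≤ k
  | .atLeast i => i = k + 1

/-- Formulas of first-order predicate calculus with equality and counting
quantifiers, over unary symbols `𝒜`, binary symbols `ℱ`, variables `V`. -/
inductive Fml (𝒜 ℱ V : Type) : Type where
  | un : 𝒜 → V → Fml 𝒜 ℱ V
  | bin : ℱ → V → V → Fml 𝒜 ℱ V
  | eq : V → V → Fml 𝒜 ℱ V
  | fls : Fml 𝒜 ℱ V
  | and : Fml 𝒜 ℱ V → Fml 𝒜 ℱ V → Fml 𝒜 ℱ V
  | or : Fml 𝒜 ℱ V → Fml 𝒜 ℱ V → Fml 𝒜 ℱ V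
  | not : Fml 𝒜 ℱ V → Fml 𝒜 ℱ V
  | cnt : CQ → V → Fml 𝒜 ℱ V → Fml 𝒜 ℱ V

/-- Update the value of a variable in an environment. -/
def Env.updVar [DecidableEq V] (e : Env 𝒜 ℱ V D) (v : V) (d : D) : Env 𝒜 ℱ V D :=
  { e with var := Function.update e.var v d }

/-- Satisfaction of a formula in an environment. -/
def Fml.Sat [DecidableEq V] : Fml 𝒜 ℱ V → Env 𝒜 ℱ V D → Prop
  | .un A v, e => e.un A (e.var v)
  | .bin f v w, e => e.bin f (e.var v) (e.var w)
  | .eq v w, e => e.var v = e.var w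
  | .fls, _ => False
  | .and F G, e => F.Sat e ∧ G.Sat e
  | .or F G, e => F.Sat e ∨ G.Sat e
  | .not F, e => ¬ F.Sat e
  | .cnt c v F, e => c.sat {d : D | F.Sat (e.updVar v d)}.ncard

/-- Quantifier depth; each counting quantifier counts as one quantifier. -/
def Fml.qdepth : Fml 𝒜 ℱ V → ℕ
  | .un _ _ => 0
  | .bin _ _ _ => 0
  | .eq _ _ => 0
  | .fls => 0
  | .and F G => max F.qdepth G.qdepth
  | .or F G => max F.qdepth G.qdepth
  | .not F => F.qdepth
  | .cnt _ _ F => F.qdepth + 1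

/-- Free variables of a formula. -/
def Fml.fv [DecidableEq V] : Fml 𝒜 ℱ V → Finset V
  | .un _ v => {v}
  | .bin _ v w => {v, w}
  | .eq v w => {v, w}
  | .fls => ∅
  | .and F G => F.fv ∪ G.fv
  | .or F G => F.fv ∪ G.fv
  | .not F => F.fv
  | .cnt _ v F => F.fv.erase v

/-- `F.DegLE k`: `F` has counting degree at most `k`, i.e. all counting
quantifiers of `F` are `∃^c` with `c ∈ C_{k+1}`. -/
def Fml.DegLE (k : ℕ) : Fml 𝒜 ℱ V → Prop
  | .un _ _ => True
  | .bin _ _ _ => True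
  | .eq _ _ => True
  | .fls => True
  | .and F G => F.DegLE k ∧ G.DegLE k
  | .or F G => F.DegLE k ∧ G.DegLE k
  | .not F => F.DegLE k
  | .cnt c _ F => c.degLE k ∧ F.DegLE k

/-! ## Atomic formulas, complete atomic types -/

/-- Atomic formulas over unary symbols `𝒜`, binary symbols `ℱ`, variables `V`
(including equality atoms). -/
inductive Atom (𝒜 ℱ V : Type) : Type where
  | un : 𝒜 → V → Atom 𝒜 ℱ V
  | bin : ℱ → V → V → Atom 𝒜 ℱ V
  | eq : V → V → Atom 𝒜 ℱ V
deriving DecidableEq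

def Atom.toFml : Atom 𝒜 ℱ V → Fml 𝒜 ℱ V
  | .un A v => .un A v
  | .bin f v w => .bin f v w
  | .eq v w => .eq v w

/-- The variables occurring in an atomic formula. -/
def Atom.varset [DecidableEq V] : Atom 𝒜 ℱ V → Finset V
  | .un _ v => {v}
  | .bin _ v w => {v, w}
  | .eq v w => {v, w}

/-- Whether an atom is an equality atom. -/
def Atom.isEq : Atom 𝒜 ℱ V → Bool
  | .eq _ _ => true
  | _ => false

def atomEquiv (𝒜 ℱ V : Type) :
    Atom 𝒜 ℱ V ≃ ((𝒜 × V) ⊕ ((ℱ × V × V) ⊕ (V × V))) where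
  toFun a := match a with
    | .un A v => Sum.inl (A, v)
    | .bin f v w => Sum.inr (Sum.inl (f, v, w))
    | .eq v w => Sum.inr (Sum.inr (v, w))
  invFun s := match s with
    | Sum.inl (A, v) => .un A v
    | Sum.inr (Sum.inl (f, v, w)) => .bin f v w
    | Sum.inr (Sum.inr (v, w)) => .eq v w
  left_inv a := by cases a <;> rfl
  right_inv s := by rcases s with ⟨A, v⟩ | ⟨f, v, w⟩ | ⟨v, w⟩ <;> rfl

instance [Fintype 𝒜] [Fintype ℱ] [Fintype V] : Fintype (Atom 𝒜 ℱ V) :=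
  Fintype.ofEquiv _ (atomEquiv 𝒜 ℱ V).symm

/-- Conjunction of a list of formulas (empty conjunction is `¬⊥`, i.e. true). -/
def listConj (l : List (Fml 𝒜 ℱ V)) : Fml 𝒜 ℱ V := l.foldr .and (.not .fls)

/-- Disjunction of a list of formulas (empty disjunction is `⊥`). -/
def listDisj (l : List (Fml 𝒜 ℱ V)) : Fml 𝒜 ℱ V := l.foldr .or .fls

/-- Conjunction of a list of atoms, each taken positively or negatively
according to the sign assignment `σ`. -/
def signedConj (l : List (Atom 𝒜 ℱ V)) (σ : Atom 𝒜 ℱ V → Bool) : Fml 𝒜 ℱ V :=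
  listConj (l.map fun a => if σ a then a.toFml else .not a.toFml)

section AtomicTypes

variable [Fintype 𝒜] [DecidableEq 𝒜] [Fintype ℱ] [DecidableEq ℱ]
  [Fintype V] [DecidableEq V]

/-- The list of all atomic formulas whose variables are among `xs`. -/
noncomputable def atomsOn (𝒜 ℱ : Type) [Fintype 𝒜] [DecidableEq 𝒜] [Fintype ℱ] [DecidableEq ℱ]
    {V : Type} [Fintype V] [DecidableEq V] (xs : Finset V) : List (Atom 𝒜 ℱ V) :=
  (Finset.univ : Finset (Atom 𝒜 ℱ V)).toList.filter fun a => decide (a.varset ⊆ xs)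

/-- The complete atomic type (CAT) formula with free variables `{x₁,…,xₙ}`
(the whole of `V`) determined by a sign assignment `σ`: the conjunction
containing, for each atomic formula `C` over `V`, the conjunct `C` if
`σ C = true` and the conjunct `¬C` otherwise. -/
noncomputable def catFml (σ : Atom 𝒜 ℱ V → Bool) : Fml 𝒜 ℱ V :=
  signedConj (Finset.univ : Finset (Atom 𝒜 ℱ V)).toList σ

/-- The CAT formula over the variable subset `xs` determined by `σ`. -/
noncomputable def gccatFml (xs : Finset V) (σ : Atom 𝒜 ℱ V → Bool) : Fml 𝒜 ℱ V :=
  signedConj (atomsOn 𝒜 ℱ xs) σ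

/-- `σ` is a general-case CAT (GCCAT) sign assignment over the variables `xs`:
the conjunct `xᵢ = xⱼ` occurs (positively) iff `i = j`, and (canonically) `σ`
is `false` outside the atoms over `xs`. -/
noncomputable def gccatSignB (xs : Finset V) (σ : Atom 𝒜 ℱ V → Bool) : Bool :=
  (xs.toList.all fun i => xs.toList.all fun j => σ (.eq i j) == decide (i = j)) &&
  ((Finset.univ : Finset (Atom 𝒜 ℱ V)).toList.all fun a =>
      decide (a.varset ⊆ xs) || !σ a)

/-- `a` is an atom of an `x`-extension: its variables are among `insert x xs`
and `x` actually occurs in it. -/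
def isExtAtom (xs : Finset V) (x : V) (a : Atom 𝒜 ℱ V) : Bool :=
  decide (a.varset ⊆ insert x xs) && decide (x ∈ a.varset)

/-- The list of atoms of `x`-extensions of GCCAT formulas over `xs`. -/
noncomputable def extAtoms (𝒜 ℱ : Type) [Fintype 𝒜] [DecidableEq 𝒜] [Fintype ℱ] [DecidableEq ℱ]
    {V : Type} [Fintype V] [DecidableEq V] (xs : Finset V) (x : V) : List (Atom 𝒜 ℱ V) :=
  (Finset.univ : Finset (Atom 𝒜 ℱ V)).toList.filter (isExtAtom xs x)

/-- The `x`-extension formula determined by a sign assignment `τ`. -/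
noncomputable def extFml (xs : Finset V) (x : V) (τ : Atom 𝒜 ℱ V → Bool) : Fml 𝒜 ℱ V :=
  signedConj (extAtoms 𝒜 ℱ xs x) τ

/-- `τ` is the sign assignment of an `x`-extension of a GCCAT formula over
`xs`: `x = x` positive, `x = xᵢ` and `xᵢ = x` negative, and (canonically) `τ`
is `false` outside extension atoms. -/
noncomputable def extSignB (xs : Finset V) (x : V) (τ : Atom 𝒜 ℱ V → Bool) : Bool :=
  τ (.eq x x) &&
  (xs.toList.all fun v => !τ (.eq x v) && !τ (.eq v x)) &&
  ((Finset.univ : Finset (Atom 𝒜 ℱ V)).toList.all fun a => isExtAtom xs x a || !τ a)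

/-- The list of all sign assignments of `x`-extensions over `xs`. -/
noncomputable def extSigns (𝒜 ℱ : Type) [Fintype 𝒜] [DecidableEq 𝒜] [Fintype ℱ] [DecidableEq ℱ]
    {V : Type} [Fintype V] [DecidableEq V] (xs : Finset V) (x : V) :
    List (Atom 𝒜 ℱ V → Bool) :=
  (Finset.univ : Finset (Atom 𝒜 ℱ V → Bool)).toList.filter (extSignB xs x)

/-- Merge of two sign assignments: the union of their positive literals. -/
def mergeSign (τ₁ τ₂ : Atom 𝒜 ℱ V → Bool) : Atom 𝒜 ℱ V → Bool :=
  fun a => τ₁ a || τ₂ a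

end AtomicTypes

/-- `T₁ ⊛ T₂` is defined iff the sets `S(T₁)`, `S(T₂)` of positive
non-equality literals are disjoint. -/
def MergeOK (τ₁ τ₂ : Atom 𝒜 ℱ V → Bool) : Prop :=
  ∀ a : Atom 𝒜 ℱ V, a.isEq = false → ¬(τ₁ a = true ∧ τ₂ a = true)

/-! ## Counting star formulas.

Variables are `Option (Fin n)`: `some i` is the free variable `xᵢ`
(`i : Fin n`), and `none` is the bound variable `x` of the counting
quantifiers. -/

/-- Data determining a counting-star formula: the set `xs` of variables of the
GCCAT part (the remaining free variables are the `yⱼ`'s), the map `ι` giving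
the equality conjuncts `yⱼ = x_{iⱼ}`, the GCCAT sign assignment `σ` over `xs`,
and the counting function `γ` on `x`-extensions. -/
structure CSData (𝒜 ℱ : Type) (n : ℕ) where
  xs : Finset (Fin n)
  ι : Fin n → Fin n
  σ : Atom 𝒜 ℱ (Option (Fin n)) → Bool
  γ : (Atom 𝒜 ℱ (Option (Fin n)) → Bool) → CQ

/-- The GCCAT variable set of a `CSData`, as a set of variables. -/
def CSData.xsO {𝒜 ℱ : Type} {n : ℕ} (c : CSData 𝒜 ℱ n) : Finset (Option (Fin n)) :=
  c.xs.image (fun i => some i)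

/-- Well-formedness of counting-star data, for counting degree `k`:
each `y ∉ xs` is equated to some variable of `xs`, `σ` is a GCCAT sign
assignment over `xs`, and every count `γ τ` lies in `C_{k+1}`. -/
def CSData.WF {𝒜 ℱ : Type} [Fintype 𝒜] [DecidableEq 𝒜] [Fintype ℱ] [DecidableEq ℱ]
    {n : ℕ} (k : ℕ) (c : CSData 𝒜 ℱ n) : Prop :=
  (∀ y, y ∉ c.xs → c.ι y ∈ c.xs) ∧
  gccatSignB c.xsO c.σ = true ∧
  (∀ τ : Atom 𝒜 ℱ (Option (Fin n)) → Bool, (c.γ τ).degLE k)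

/-- The `k`-counting-star formula determined by counting-star data:
`⋀_{j} yⱼ = x_{iⱼ} ∧ F ∧ ⋀_{F′ ∈ ext(F,x)} ∃^{γ(F′)} x. F′`. -/
noncomputable def csFml {𝒜 ℱ : Type}
    [Fintype 𝒜] [DecidableEq 𝒜] [Fintype ℱ] [DecidableEq ℱ] {n : ℕ}
    (c : CSData 𝒜 ℱ n) : Fml 𝒜 ℱ (Option (Fin n)) :=
  (listConj ((((Finset.univ : Finset (Fin n)) \ c.xs).toList).map fun y =>
      Fml.eq (some y) (some (c.ι y)))).and <|
  (gccatFml c.xsO c.σ).and <|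
  listConj ((extSigns 𝒜 ℱ c.xsO none).map fun τ =>
    Fml.cnt (c.γ τ) none (extFml c.xsO none τ))

/-! ## Auxiliary development for the proof -/

section AuxDev

open Classical

attribute [local instance] Classical.propDecidable

variable {𝒜 ℱ : Type}

/-- Rename the variables of an atom. -/
def Atom.rename {V W : Type} (r : V → W) : Atom 𝒜 ℱ V → Atom 𝒜 ℱ W
  | .un A v => .un A (r v)
  | .bin f v w => .bin f (r v) (r w)
  | .eq v w => .eq (r v) (r w)

lemma Atom.rename_varset {V W : Type} [DecidableEq V] [DecidableEq W]
    (r : V → W) (a : Atom 𝒜 ℱ V) :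
    (a.rename r).varset = a.varset.image r := by
  cases a <;> simp [Atom.rename, Atom.varset, Finset.image_insert]

lemma Atom.rename_id {V : Type} (a : Atom 𝒜 ℱ V) : a.rename id = a := by
  cases a <;> rfl

lemma Atom.toFml_fv {V : Type} [DecidableEq V] (a : Atom 𝒜 ℱ V) :
    a.toFml.fv = a.varset := by
  cases a <;> rfl

/-- Satisfaction transfer along a variable renaming. -/
lemma Atom.rename_sat {V D : Type} [DecidableEq V] (a : Atom 𝒜 ℱ V) (r : V → V)
    (e e' : Env 𝒜 ℱ V D) (hun : e'.un = e.un) (hbin : e'.bin = e.bin)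
    (hv : ∀ w ∈ a.varset, e'.var (r w) = e.var w) :
    ((a.rename r).toFml.Sat e' ↔ a.toFml.Sat e) := by
  cases a with
  | un A v =>
      simp only [Atom.rename, Atom.toFml, Fml.Sat, hun]
      rw [hv v (by simp [Atom.varset])]
  | bin f v w =>
      simp only [Atom.rename, Atom.toFml, Fml.Sat, hbin]
      rw [hv v (by simp [Atom.varset]), hv w (by simp [Atom.varset])]
  | eq v w =>
      simp only [Atom.rename, Atom.toFml, Fml.Sat]
      rw [hv v (by simp [Atom.varset]), hv w (by simp [Atom.varset])]

lemma listConj_sat {V D : Type} [DecidableEq V] (l : List (Fml 𝒜 ℱ V))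
    (e : Env 𝒜 ℱ V D) : (listConj l).Sat e ↔ ∀ F ∈ l, F.Sat e := by
  induction l with
  | nil => simp [listConj, Fml.Sat]
  | cons F t ih => simp [listConj, Fml.Sat] at ih ⊢; tauto

lemma signedConj_sat {V D : Type} [DecidableEq V] (l : List (Atom 𝒜 ℱ V))
    (σ : Atom 𝒜 ℱ V → Bool) (e : Env 𝒜 ℱ V D) :
    (signedConj l σ).Sat e ↔ ∀ a ∈ l, (a.toFml.Sat e ↔ σ a = true) := by
  rw [signedConj, listConj_sat]
  constructor
  · intro h a ha
    have := h _ (List.mem_map_of_mem ha)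
    by_cases hσ : σ a <;> simp [hσ, Fml.Sat] at this ⊢ <;> tauto
  · intro h F hF
    rcases List.mem_map.1 hF with ⟨a, ha, rfl⟩
    have := h a ha
    by_cases hσ : σ a <;> simp [hσ, Fml.Sat] at this ⊢ <;> tauto

lemma listConj_fv_mem {V : Type} [DecidableEq V] (l : List (Fml 𝒜 ℱ V)) (x : V) :
    x ∈ (listConj l).fv ↔ ∃ F ∈ l, x ∈ F.fv := by
  induction l with
  | nil => simp [listConj, Fml.fv]
  | cons F t ih =>
      simp only [listConj] at ih
      simp [listConj, Fml.fv, Finset.mem_union, ih]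

lemma signedConj_fv_mem {V : Type} [DecidableEq V] (l : List (Atom 𝒜 ℱ V))
    (σ : Atom 𝒜 ℱ V → Bool) (x : V) :
    x ∈ (signedConj l σ).fv ↔ ∃ a ∈ l, x ∈ a.varset := by
  rw [signedConj, listConj_fv_mem]
  constructor
  · rintro ⟨F, hF, hx⟩
    rcases List.mem_map.1 hF with ⟨a, ha, rfl⟩
    refine ⟨a, ha, ?_⟩
    by_cases hσ : σ a <;> simp [hσ, Fml.fv, Atom.toFml_fv] at hx <;> exact hx
  · rintro ⟨a, ha, hx⟩
    refine ⟨if σ a then a.toFml else .not a.toFml, List.mem_map_of_mem ha, ?_⟩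
    by_cases hσ : σ a <;> simp [hσ, Fml.fv, Atom.toFml_fv] <;> exact hx


section SignSpecs
set_option linter.unusedSectionVars false

variable [Fintype 𝒜] [DecidableEq 𝒜] [Fintype ℱ] [DecidableEq ℱ]
variable {V : Type} [Fintype V] [DecidableEq V]

lemma mem_atomsOn_iff (xs : Finset V) (a : Atom 𝒜 ℱ V) :
    a ∈ atomsOn 𝒜 ℱ xs ↔ a.varset ⊆ xs := by
  simp [atomsOn, List.mem_filter, Finset.mem_toList]

lemma isExtAtom_iff (xs : Finset V) (x : V) (a : Atom 𝒜 ℱ V) :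
    isExtAtom xs x a = true ↔ a.varset ⊆ insert x xs ∧ x ∈ a.varset := by
  simp [isExtAtom]

lemma mem_extAtoms_iff (xs : Finset V) (x : V) (a : Atom 𝒜 ℱ V) :
    a ∈ extAtoms 𝒜 ℱ xs x ↔ isExtAtom xs x a = true := by
  simp [extAtoms, List.mem_filter, Finset.mem_toList]

lemma mem_extSigns_iff (xs : Finset V) (x : V) (τ : Atom 𝒜 ℱ V → Bool) :
    τ ∈ extSigns 𝒜 ℱ xs x ↔ extSignB xs x τ = true := by
  simp [extSigns, List.mem_filter, Finset.mem_toList]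

lemma gccatSignB_spec (xs : Finset V) (σ : Atom 𝒜 ℱ V → Bool)
    (h : gccatSignB xs σ = true) :
    (∀ i ∈ xs, ∀ j ∈ xs, σ (.eq i j) = decide (i = j)) ∧
    (∀ a : Atom 𝒜 ℱ V, ¬ a.varset ⊆ xs → σ a = false) := by
  rw [gccatSignB, Bool.and_eq_true, List.all_eq_true] at h
  obtain ⟨h1, h2⟩ := h
  rw [List.all_eq_true] at h2
  constructor
  · intro i hi j hj
    have := h1 i (Finset.mem_toList.2 hi)
    rw [List.all_eq_true] at this
    have := this j (Finset.mem_toList.2 hj)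
    exact beq_iff_eq.1 this
  · intro a ha
    have := h2 a (Finset.mem_toList.2 (Finset.mem_univ a))
    rw [Bool.or_eq_true, decide_eq_true_eq, Bool.not_eq_true'] at this
    tauto

lemma extSignB_spec (xs : Finset V) (x : V) (τ : Atom 𝒜 ℱ V → Bool)
    (h : extSignB xs x τ = true) :
    τ (.eq x x) = true ∧
    (∀ v ∈ xs, τ (.eq x v) = false ∧ τ (.eq v x) = false) ∧
    (∀ a : Atom 𝒜 ℱ V, isExtAtom xs x a = false → τ a = false) := by
  rw [extSignB, Bool.and_eq_true, Bool.and_eq_true, List.all_eq_true] at h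
  obtain ⟨⟨h0, h1⟩, h2⟩ := h
  rw [List.all_eq_true] at h2
  refine ⟨h0, ?_, ?_⟩
  · intro v hv
    have := h1 v (Finset.mem_toList.2 hv)
    rw [Bool.and_eq_true, Bool.not_eq_true', Bool.not_eq_true'] at this
    exact this
  · intro a ha
    have := h2 a (Finset.mem_toList.2 (Finset.mem_univ a))
    rw [Bool.or_eq_true, Bool.not_eq_true'] at this
    rcases this with h | h
    · rw [ha] at h; exact absurd h (by simp)
    · exact h

lemma extSignB_of (xs : Finset V) (x : V) (τ : Atom 𝒜 ℱ V → Bool)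
    (h0 : τ (.eq x x) = true)
    (h1 : ∀ v ∈ xs, τ (.eq x v) = false ∧ τ (.eq v x) = false)
    (h2 : ∀ a : Atom 𝒜 ℱ V, isExtAtom xs x a = false → τ a = false) :
    extSignB xs x τ = true := by
  rw [extSignB, Bool.and_eq_true, Bool.and_eq_true, List.all_eq_true]
  refine ⟨⟨h0, ?_⟩, ?_⟩
  · intro v hv
    have := h1 v (Finset.mem_toList.1 hv)
    simp [this.1, this.2]
  · rw [List.all_eq_true]
    intro a _
    by_cases ha : isExtAtom xs x a
    · simp [ha]
    · simp [Bool.or_eq_true, Bool.not_eq_true', h2 a (by simpa using ha)]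

lemma gccatSignB_of (xs : Finset V) (σ : Atom 𝒜 ℱ V → Bool)
    (h1 : ∀ i ∈ xs, ∀ j ∈ xs, σ (.eq i j) = decide (i = j))
    (h2 : ∀ a : Atom 𝒜 ℱ V, ¬ a.varset ⊆ xs → σ a = false) :
    gccatSignB xs σ = true := by
  rw [gccatSignB, Bool.and_eq_true, List.all_eq_true]
  constructor
  · intro i hi
    rw [List.all_eq_true]
    intro j hj
    rw [h1 i (Finset.mem_toList.1 hi) j (Finset.mem_toList.1 hj)]
    simp
  · rw [List.all_eq_true]
    intro a _
    by_cases ha : a.varset ⊆ xs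
    · simp [ha]
    · simp [Bool.or_eq_true, Bool.not_eq_true', h2 a ha]

end SignSpecs


section Core
set_option linter.unusedSectionVars false

variable [Fintype 𝒜] [DecidableEq 𝒜] [Fintype ℱ] [DecidableEq ℱ] {n : ℕ}

/-- Map each variable to its representative in `c.xs`. -/
def repc (c : CSData 𝒜 ℱ n) : Option (Fin n) → Option (Fin n)
  | none => none
  | some j => if j ∈ c.xs then some j else some (c.ι j)

/-- The bound variable `v` goes to `none`, others to their representatives. -/
def rmap (c : CSData 𝒜 ℱ n) (v w : Option (Fin n)) : Option (Fin n) :=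
  if w = v then none else repc c w

/-- The extension sign assignment realized by a domain element `d`. -/
noncomputable def extOf (c : CSData 𝒜 ℱ n) {D : Type} (e : Env 𝒜 ℱ (Option (Fin n)) D)
    (d : D) : Atom 𝒜 ℱ (Option (Fin n)) → Bool :=
  fun a => isExtAtom c.xsO none a && decide (a.toFml.Sat (e.updVar none d))

/-- The extension sign assignment of the named element `xᵢ`, computed from `σ`. -/
noncomputable def nuSign (c : CSData 𝒜 ℱ n) (i : Fin n) :
    Atom 𝒜 ℱ (Option (Fin n)) → Bool :=
  fun a => isExtAtom c.xsO none a && c.σ (a.rename (fun w => some (w.getD i)))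

/-- The semantic content of `e ⊨ csFml c`. -/
structure Good (c : CSData 𝒜 ℱ n) {D : Type} (e : Env 𝒜 ℱ (Option (Fin n)) D) : Prop where
  e1 : ∀ y : Fin n, y ∉ c.xs → e.var (some y) = e.var (some (c.ι y))
  e2 : ∀ a : Atom 𝒜 ℱ (Option (Fin n)), a.varset ⊆ c.xsO →
      (a.toFml.Sat e ↔ c.σ a = true)
  e3 : ∀ τ, extSignB c.xsO none τ = true →
      (c.γ τ).sat {d : D | (extFml c.xsO none τ).Sat (e.updVar none d)}.ncard

lemma csFml_sat_iff {D : Type} (c : CSData 𝒜 ℱ n) (e : Env 𝒜 ℱ (Option (Fin n)) D) :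
    (csFml c).Sat e ↔ Good c e := by
  simp only [csFml, Fml.Sat, gccatFml]
  rw [listConj_sat, signedConj_sat, listConj_sat]
  constructor
  · rintro ⟨h1, h2, h3⟩
    refine ⟨?_, ?_, ?_⟩
    · intro y hy
      have hy' : y ∈ (Finset.univ \ c.xs).toList := Finset.mem_toList.2 (by simp [hy])
      exact h1 _ (List.mem_map_of_mem hy')
    · intro a ha
      exact h2 a ((mem_atomsOn_iff _ _).2 ha)
    · intro τ hτ
      have hτ' : τ ∈ extSigns 𝒜 ℱ c.xsO none := (mem_extSigns_iff _ _ _).2 hτ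
      exact h3 _ (List.mem_map_of_mem hτ')
  · rintro ⟨h1, h2, h3⟩
    refine ⟨?_, ?_, ?_⟩
    · intro F hF
      rcases List.mem_map.1 hF with ⟨y, hy, rfl⟩
      rw [Finset.mem_toList, Finset.mem_sdiff] at hy
      exact h1 y hy.2
    · intro a ha
      exact h2 a ((mem_atomsOn_iff _ _).1 ha)
    · intro F hF
      rcases List.mem_map.1 hF with ⟨τ, hτ, rfl⟩
      exact h3 τ ((mem_extSigns_iff _ _ _).1 hτ)

lemma none_not_mem_xsO (c : CSData 𝒜 ℱ n) : (none : Option (Fin n)) ∉ c.xsO := by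
  simp [CSData.xsO]

lemma mem_xsO_iff (c : CSData 𝒜 ℱ n) (w : Option (Fin n)) :
    w ∈ c.xsO ↔ ∃ i ∈ c.xs, w = some i := by
  simp [CSData.xsO, eq_comm]

lemma repc_mem_xsO (c : CSData 𝒜 ℱ n) (hW1 : ∀ y, y ∉ c.xs → c.ι y ∈ c.xs)
    (j : Fin n) : repc c (some j) ∈ c.xsO := by
  by_cases h : j ∈ c.xs <;> simp [repc, h, CSData.xsO]
  exact hW1 j h

lemma Good.var_repc {c : CSData 𝒜 ℱ n} {D : Type} {e : Env 𝒜 ℱ (Option (Fin n)) D}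
    (hg : Good c e) : ∀ w, e.var (repc c w) = e.var w := by
  intro w
  cases w with
  | none => rfl
  | some j =>
      by_cases h : j ∈ c.xs
      · simp [repc, h]
      · simp only [repc, h, if_false]
        exact (hg.e1 j h).symm

lemma Good.var_inj {c : CSData 𝒜 ℱ n} {D : Type} {e : Env 𝒜 ℱ (Option (Fin n)) D}
    (hg : Good c e) (hσ : gccatSignB c.xsO c.σ = true) {i j : Fin n}
    (hi : i ∈ c.xs) (hj : j ∈ c.xs) :
    e.var (some i) = e.var (some j) ↔ i = j := by
  have hiO : (some i : Option (Fin n)) ∈ c.xsO := by simp [CSData.xsO, hi]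
  have hjO : (some j : Option (Fin n)) ∈ c.xsO := by simp [CSData.xsO, hj]
  have h2 := hg.e2 (.eq (some i) (some j))
    (by simp [Atom.varset, Finset.insert_subset_iff, hiO, hjO])
  have heq := (gccatSignB_spec _ _ hσ).1 (some i) hiO (some j) hjO
  simp only [Atom.toFml, Fml.Sat] at h2
  rw [heq] at h2
  simpa [decide_eq_true_eq] using h2

/-- Truth value of an atom, looked up in `σ` or `τ` as appropriate. -/
def atomVal (σ τ : Atom 𝒜 ℱ (Option (Fin n)) → Bool)
    (a : Atom 𝒜 ℱ (Option (Fin n))) : Prop :=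
  (if none ∈ a.varset then τ a else σ a) = true

/-- Abstract evaluation of a quantifier-free formula from sign assignments. -/
def qfEval (σ τ : Atom 𝒜 ℱ (Option (Fin n)) → Bool)
    (r : Option (Fin n) → Option (Fin n)) : Fml 𝒜 ℱ (Option (Fin n)) → Prop
  | .un A v => atomVal σ τ ((Atom.un A v).rename r)
  | .bin f v w => atomVal σ τ ((Atom.bin f v w).rename r)
  | .eq v w => atomVal σ τ ((Atom.eq v w).rename r)
  | .fls => False
  | .and F G => qfEval σ τ r F ∧ qfEval σ τ r G
  | .or F G => qfEval σ τ r F ∨ qfEval σ τ r G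
  | .not F => ¬ qfEval σ τ r F
  | .cnt _ _ _ => False

lemma atom_eval (c : CSData 𝒜 ℱ n) (hW1 : ∀ y, y ∉ c.xs → c.ι y ∈ c.xs)
    {D : Type} (e : Env 𝒜 ℱ (Option (Fin n)) D) (hg : Good c e)
    (v : Option (Fin n)) (d : D) (a : Atom 𝒜 ℱ (Option (Fin n)))
    (ha : none ∈ a.varset → v = none) :
    a.toFml.Sat (e.updVar v d) ↔ atomVal c.σ (extOf c e d) (a.rename (rmap c v)) := by
  have hstep : (a.rename (rmap c v)).toFml.Sat (e.updVar none d) ↔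
      a.toFml.Sat (e.updVar v d) := by
    refine Atom.rename_sat a (rmap c v) (e.updVar v d) (e.updVar none d) rfl rfl ?_
    intro w hw
    by_cases hwv : w = v
    · subst hwv
      simp [rmap, Env.updVar, Function.update_self]
    · have hwn : w ≠ none := by
        intro h
        exact hwv (h.trans (ha (h ▸ hw)).symm)
      obtain ⟨jw, rfl⟩ := Option.ne_none_iff_exists'.1 hwn
      have hr : rmap c v (some jw) = repc c (some jw) := by simp [rmap, hwv]
      have hrn : repc c (some jw) ≠ none := by
        by_cases h : jw ∈ c.xs <;> simp [repc, h]
      rw [hr]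
      show Function.update e.var none d (repc c (some jw)) =
        Function.update e.var v d (some jw)
      rw [Function.update_of_ne hrn, Function.update_of_ne hwv]
      exact hg.var_repc _
  rw [← hstep]
  have hmem : ∀ x ∈ (a.rename (rmap c v)).varset, x ∈ insert none c.xsO := by
    intro x hx
    rw [Atom.rename_varset] at hx
    rcases Finset.mem_image.1 hx with ⟨w, _, rfl⟩
    by_cases hwv : w = v
    · simp [rmap, hwv]
    · cases w with
      | none => simp [rmap, repc, hwv]
      | some j =>
          simp only [rmap, hwv, if_false]
          exact Finset.mem_insert_of_mem (repc_mem_xsO c hW1 j)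
  by_cases hn : none ∈ (a.rename (rmap c v)).varset
  · have hext : isExtAtom c.xsO none (a.rename (rmap c v)) = true := by
      rw [isExtAtom_iff]
      exact ⟨hmem, hn⟩
    simp [atomVal, hn, extOf, hext, decide_eq_true_eq]
  · have hsub : (a.rename (rmap c v)).varset ⊆ c.xsO := by
      intro x hx
      rcases Finset.mem_insert.1 (hmem x hx) with rfl | h
      · exact absurd hx hn
      · exact h
    have hv : ∀ w ∈ (a.rename (rmap c v)).varset,
        e.var (id w) = (e.updVar none d).var w := by
      intro w hw
      have hwn : w ≠ none := fun he => hn (he ▸ hw)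
      show e.var w = Function.update e.var none d w
      rw [Function.update_of_ne hwn]
    have hswap := Atom.rename_sat (a.rename (rmap c v)) id (e.updVar none d) e rfl rfl hv
    rw [Atom.rename_id] at hswap
    rw [← hswap, hg.e2 _ hsub]
    simp [atomVal, hn]

lemma qf_eval (c : CSData 𝒜 ℱ n) (hW1 : ∀ y, y ∉ c.xs → c.ι y ∈ c.xs)
    {D : Type} (e : Env 𝒜 ℱ (Option (Fin n)) D) (hg : Good c e)
    (v : Option (Fin n)) (d : D) :
    ∀ G : Fml 𝒜 ℱ (Option (Fin n)), G.qdepth = 0 → (none ∈ G.fv → v = none) →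
    (G.Sat (e.updVar v d) ↔ qfEval c.σ (extOf c e d) (rmap c v) G) := by
  intro G
  induction G with
  | un A w =>
      intro _ hfv
      exact atom_eval c hW1 e hg v d (.un A w) (by simpa [Atom.varset, Fml.fv] using hfv)
  | bin f w₁ w₂ =>
      intro _ hfv
      exact atom_eval c hW1 e hg v d (.bin f w₁ w₂)
        (by simpa [Atom.varset, Fml.fv] using hfv)
  | eq w₁ w₂ =>
      intro _ hfv
      exact atom_eval c hW1 e hg v d (.eq w₁ w₂)
        (by simpa [Atom.varset, Fml.fv] using hfv)
  | fls => intro _ _; simp [Fml.Sat, qfEval]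
  | and F G ihF ihG =>
      intro hq hfv
      simp only [Fml.qdepth, Nat.max_eq_zero_iff] at hq
      rw [show (Fml.and F G).Sat (e.updVar v d) ↔ _ ∧ _ from Iff.rfl]
      rw [ihF hq.1 (fun h => hfv (by simp [Fml.fv, h])),
        ihG hq.2 (fun h => hfv (by simp [Fml.fv, h]))]
      rfl
  | or F G ihF ihG =>
      intro hq hfv
      simp only [Fml.qdepth, Nat.max_eq_zero_iff] at hq
      rw [show (Fml.or F G).Sat (e.updVar v d) ↔ _ ∨ _ from Iff.rfl]
      rw [ihF hq.1 (fun h => hfv (by simp [Fml.fv, h])),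
        ihG hq.2 (fun h => hfv (by simp [Fml.fv, h]))]
      rfl
  | not F ihF =>
      intro hq hfv
      rw [show (Fml.not F).Sat (e.updVar v d) ↔ ¬ _ from Iff.rfl]
      rw [ihF hq (fun h => hfv (by simpa [Fml.fv] using h))]
      rfl
  | cnt q w F ihF =>
      intro hq _
      simp [Fml.qdepth] at hq


/-- The set of named elements (values of the `xᵢ`). -/
def Named (c : CSData 𝒜 ℱ n) {D : Type} (e : Env 𝒜 ℱ (Option (Fin n)) D) : Set D :=
  (fun i => e.var (some i)) '' (c.xs : Set (Fin n))

/-- The set of elements realizing the extension `τ`. -/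
def Eset (c : CSData 𝒜 ℱ n) {D : Type} (e : Env 𝒜 ℱ (Option (Fin n)) D)
    (τ : Atom 𝒜 ℱ (Option (Fin n)) → Bool) : Set D :=
  {d | (extFml c.xsO none τ).Sat (e.updVar none d)}

lemma extOf_named (c : CSData 𝒜 ℱ n) {D : Type} (e : Env 𝒜 ℱ (Option (Fin n)) D)
    (hg : Good c e) {i : Fin n} (hi : i ∈ c.xs) :
    extOf c e (e.var (some i)) = nuSign c i := by
  funext a
  by_cases hext : isExtAtom c.xsO none a = true
  · have hsub := (isExtAtom_iff _ _ _).1 hext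
    have hv : ∀ w ∈ a.varset,
        e.var (some (w.getD i)) = (e.updVar none (e.var (some i))).var w := by
      intro w hw
      cases w with
      | none =>
          show e.var (some i) = Function.update e.var none (e.var (some i)) none
          rw [Function.update_self]
      | some j =>
          show e.var (some j) = Function.update e.var none (e.var (some i)) (some j)
          rw [Function.update_of_ne (by simp)]
    have hren := Atom.rename_sat a (fun w => some (w.getD i))
      (e.updVar none (e.var (some i))) e rfl rfl hv
    have hsub2 : (a.rename (fun w => some (w.getD i))).varset ⊆ c.xsO := by
      intro x hx
      rw [Atom.rename_varset] at hx
      rcases Finset.mem_image.1 hx with ⟨w, hw, rfl⟩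
      cases w with
      | none => simp [CSData.xsO, hi]
      | some j =>
          have := hsub.1 hw
          rcases Finset.mem_insert.1 this with h | h
          · exact absurd h (by simp)
          · simpa using h
    have he2 := hg.e2 _ hsub2
    show (isExtAtom c.xsO none a && _) = (isExtAtom c.xsO none a && _)
    rw [hext, Bool.true_and, Bool.true_and, Bool.eq_iff_iff, decide_eq_true_eq]
    rw [← hren, he2]
  · show (isExtAtom c.xsO none a && _) = (isExtAtom c.xsO none a && _)
    rw [Bool.not_eq_true] at hext
    rw [hext, Bool.false_and, Bool.false_and]

lemma extSignB_extOf (c : CSData 𝒜 ℱ n) {D : Type} (e : Env 𝒜 ℱ (Option (Fin n)) D)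
    {d : D} (hd : d ∉ Named c e) : extSignB c.xsO none (extOf c e d) = true := by
  apply extSignB_of
  · have hext : isExtAtom c.xsO none (Atom.eq none none : Atom 𝒜 ℱ (Option (Fin n))) = true := by
      rw [isExtAtom_iff]
      simp [Atom.varset]
    simp [extOf, hext, Atom.toFml, Fml.Sat]
  · intro w hw
    rcases (mem_xsO_iff c w).1 hw with ⟨i, hi, rfl⟩
    have hne : (e.updVar none d).var none ≠ (e.updVar none d).var (some i) := by
      show Function.update e.var none d none ≠ Function.update e.var none d (some i)
      rw [Function.update_self, Function.update_of_ne (by simp)]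
      intro h
      exact hd ⟨i, hi, h.symm⟩
    constructor
    · simp [extOf, Atom.toFml, Fml.Sat, hne]
    · simp only [extOf, Atom.toFml, Fml.Sat, Bool.and_eq_false_iff]
      right
      rw [decide_eq_false_iff_not]
      exact fun h => hne h.symm
  · intro a ha
    simp [extOf, ha]

lemma named_not_mem_Eset (c : CSData 𝒜 ℱ n) {D : Type} (e : Env 𝒜 ℱ (Option (Fin n)) D)
    {τ} (hτ : extSignB c.xsO none τ = true) {i : Fin n} (hi : i ∈ c.xs) :
    e.var (some i) ∉ Eset c e τ := by
  intro h
  have hmem : (Atom.eq none (some i) : Atom 𝒜 ℱ (Option (Fin n))) ∈ extAtoms 𝒜 ℱ c.xsO none := by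
    rw [mem_extAtoms_iff, isExtAtom_iff]
    refine ⟨?_, by simp [Atom.varset]⟩
    simp [Atom.varset, Finset.insert_subset_iff, CSData.xsO, hi]
  have hsat := (signedConj_sat _ _ _).1 h _ hmem
  have hτf := ((extSignB_spec _ _ _ hτ).2.1 (some i) (by simp [CSData.xsO, hi])).1
  rw [hτf] at hsat
  simp only [Atom.toFml, Fml.Sat] at hsat
  have : (e.updVar none (e.var (some i))).var none =
      (e.updVar none (e.var (some i))).var (some i) := by
    show Function.update e.var none (e.var (some i)) none =
      Function.update e.var none (e.var (some i)) (some i)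
    rw [Function.update_self, Function.update_of_ne (by simp)]
  rw [hsat] at this
  simp at this

lemma mem_Eset_iff (c : CSData 𝒜 ℱ n) {D : Type} (e : Env 𝒜 ℱ (Option (Fin n)) D)
    {τ} (hτ : extSignB c.xsO none τ = true) (d : D) :
    d ∈ Eset c e τ ↔ extOf c e d = τ := by
  constructor
  · intro h
    funext a
    by_cases hext : isExtAtom c.xsO none a = true
    · have hsat := (signedConj_sat _ _ _).1 h _ ((mem_extAtoms_iff _ _ _).2 hext)
      simp only [extOf, hext, Bool.true_and]
      rw [Bool.eq_iff_iff, decide_eq_true_eq]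
      exact hsat
    · rw [Bool.not_eq_true] at hext
      simp only [extOf, hext, Bool.false_and]
      exact ((extSignB_spec _ _ _ hτ).2.2 a hext).symm
  · intro h
    rw [show (d ∈ Eset c e τ) = (extFml c.xsO none τ).Sat (e.updVar none d) from rfl,
      extFml, signedConj_sat]
    intro a ha
    have hext := (mem_extAtoms_iff _ _ _).1 ha
    rw [← h]
    simp [extOf, hext, decide_eq_true_eq]

/-- Equality of naturals up to the threshold `k`. -/
def eqk (k a b : ℕ) : Prop := a = b ∨ (k < a ∧ k < b)

lemma eqk_add {k a b a' b' : ℕ} (h : eqk k a b) (h' : eqk k a' b') :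
    eqk k (a + a') (b + b') := by
  rcases h with h | h <;> rcases h' with h' | h' <;>
    first
      | exact Or.inl (by omega)
      | exact Or.inr (by omega)

lemma eqk_sum {α : Type*} (k : ℕ) (l : List α) (f g : α → ℕ)
    (h : ∀ x ∈ l, eqk k (f x) (g x)) :
    eqk k (l.map f).sum (l.map g).sum := by
  induction l with
  | nil => exact Or.inl rfl
  | cons x t ih =>
      simp only [List.map_cons, List.sum_cons]
      exact eqk_add (h x (by simp)) (ih fun y hy => h y (by simp [hy]))

lemma eqk_of_sat {k : ℕ} {q : CQ} (hq : q.degLE k) {a b : ℕ}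
    (ha : q.sat a) (hb : q.sat b) : eqk k a b := by
  cases q with
  | exact i =>
      simp only [CQ.sat] at ha hb
      exact Or.inl (ha.trans hb.symm)
  | atLeast i =>
      simp [CQ.sat] at ha hb
      simp [CQ.degLE] at hq
      exact Or.inr (by omega)

lemma CQ.sat_congr {k : ℕ} {q : CQ} (hq : q.degLE k) {a b : ℕ} (h : eqk k a b) :
    q.sat a ↔ q.sat b := by
  cases q with
  | exact i =>
      simp only [CQ.degLE] at hq
      simp only [CQ.sat]
      rcases h with h | h
      · omega
      · constructor <;> (intro h2; omega)
  | atLeast i =>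
      simp only [CQ.degLE] at hq
      simp only [CQ.sat]
      rcases h with h | h
      · omega
      · constructor <;> (intro h2; omega)

lemma ncard_list_biUnion {α D : Type} [Finite D] :
    ∀ (l : List α), l.Nodup → ∀ (E : α → Set D),
    (∀ a ∈ l, ∀ b ∈ l, a ≠ b → E a ∩ E b = ∅) →
    {d | ∃ x ∈ l, d ∈ E x}.ncard = (l.map fun x => (E x).ncard).sum := by
  intro l
  induction l with
  | nil => intro _ E _; simp
  | cons x t ih =>
      intro hnd E hdisj
      have hset : {d | ∃ y ∈ x :: t, d ∈ E y} = E x ∪ {d | ∃ y ∈ t, d ∈ E y} := by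
        ext d; simp [or_and_right, exists_or]
      rw [hset, Set.ncard_union_eq ?_ (Set.toFinite _) (Set.toFinite _)]
      · rw [ih (List.Nodup.of_cons hnd) E
          (fun a ha b hb hab => hdisj a (by simp [ha]) b (by simp [hb]) hab)]
        simp
      · rw [Set.disjoint_left]
        rintro d hdx ⟨y, hy, hdy⟩
        have hxy : x ≠ y := by
          rintro rfl
          exact (List.nodup_cons.1 hnd).1 hy
        have := hdisj x (by simp) y (by simp [hy]) hxy
        exact absurd (Set.mem_inter hdx hdy) (by simp [this])


lemma count_decomp (c : CSData 𝒜 ℱ n) (hW1 : ∀ y, y ∉ c.xs → c.ι y ∈ c.xs)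
    (hσ : gccatSignB c.xsO c.σ = true)
    {D : Type} [Finite D] (e : Env 𝒜 ℱ (Option (Fin n)) D) (hg : Good c e)
    (v : Option (Fin n)) (G : Fml 𝒜 ℱ (Option (Fin n)))
    (hq : G.qdepth = 0) (hfv : none ∈ G.fv → v = none) :
    {d : D | G.Sat (e.updVar v d)}.ncard =
      {i : Fin n | i ∈ c.xs ∧ qfEval c.σ (nuSign c i) (rmap c v) G}.ncard
      + (((extSigns 𝒜 ℱ c.xsO none).filter
            fun τ => decide (qfEval c.σ τ (rmap c v) G)).map
          (fun τ => (Eset c e τ).ncard)).sum := by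
  have hS : ∀ d : D, G.Sat (e.updVar v d) ↔ qfEval c.σ (extOf c e d) (rmap c v) G :=
    fun d => qf_eval c hW1 e hg v d G hq hfv
  set S := {d : D | G.Sat (e.updVar v d)} with hSdef
  have hsplit : S = (S ∩ Named c e) ∪ (S \ Named c e) := (Set.inter_union_diff S _).symm
  have hdisj : Disjoint (S ∩ Named c e) (S \ Named c e) :=
    Set.disjoint_of_subset_left Set.inter_subset_right Set.disjoint_sdiff_right
  rw [hsplit, Set.ncard_union_eq hdisj (Set.toFinite _) (Set.toFinite _)]
  congr 1
  · -- named part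
    have himg : S ∩ Named c e =
        (fun i => e.var (some i)) ''
          {i : Fin n | i ∈ c.xs ∧ qfEval c.σ (nuSign c i) (rmap c v) G} := by
      ext d
      constructor
      · rintro ⟨hdS, i, hi, rfl⟩
        refine ⟨i, ⟨hi, ?_⟩, rfl⟩
        have := (hS _).1 hdS
        rwa [extOf_named c e hg hi] at this
      · rintro ⟨i, ⟨hi, hQ⟩, rfl⟩
        refine ⟨?_, ⟨i, hi, rfl⟩⟩
        rw [hSdef]
        show G.Sat (e.updVar v (e.var (some i)))
        rw [hS]
        rwa [extOf_named c e hg hi]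
    rw [himg]
    apply Set.ncard_image_of_injOn
    intro i hi j hj hij
    exact (hg.var_inj hσ hi.1 hj.1).1 hij
  · -- unnamed part
    have hbi : S \ Named c e =
        {d | ∃ τ ∈ (extSigns 𝒜 ℱ c.xsO none).filter
            (fun τ => decide (qfEval c.σ τ (rmap c v) G)), d ∈ Eset c e τ} := by
      ext d
      constructor
      · rintro ⟨hdS, hdN⟩
        have hB := extSignB_extOf c e hdN
        refine ⟨extOf c e d, ?_, ?_⟩
        · rw [List.mem_filter]
          refine ⟨(mem_extSigns_iff _ _ _).2 hB, ?_⟩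
          rw [decide_eq_true_eq]
          exact (hS d).1 hdS
        · exact (mem_Eset_iff c e hB d).2 rfl
      · rintro ⟨τ, hτmem, hdE⟩
        rw [List.mem_filter] at hτmem
        have hB := (mem_extSigns_iff _ _ _).1 hτmem.1
        have hext := (mem_Eset_iff c e hB d).1 hdE
        constructor
        · rw [hSdef]
          show G.Sat (e.updVar v d)
          rw [hS, hext]
          exact of_decide_eq_true hτmem.2
        · rintro ⟨i, hi, rfl⟩
          exact named_not_mem_Eset c e hB hi hdE
    rw [hbi]
    apply ncard_list_biUnion
    · exact List.Nodup.filter _ (List.Nodup.filter _ (Finset.nodup_toList _))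
    · intro τ₁ h₁ τ₂ h₂ hne
      rw [List.mem_filter] at h₁ h₂
      have hB₁ := (mem_extSigns_iff _ _ _).1 h₁.1
      have hB₂ := (mem_extSigns_iff _ _ _).1 h₂.1
      ext d
      simp only [Set.mem_inter_iff, Set.mem_empty_iff_false, iff_false, not_and]
      intro hd1 hd2
      exact hne (((mem_Eset_iff c e hB₁ d).1 hd1).symm.trans
        ((mem_Eset_iff c e hB₂ d).1 hd2))

lemma cnt_core {k : ℕ} (c : CSData 𝒜 ℱ n) (hWF : c.WF k)
    {D D' : Type} [Finite D] [Finite D']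
    (e : Env 𝒜 ℱ (Option (Fin n)) D) (e' : Env 𝒜 ℱ (Option (Fin n)) D')
    (hg : Good c e) (hg' : Good c e')
    (q : CQ) (v : Option (Fin n)) (G : Fml 𝒜 ℱ (Option (Fin n)))
    (hdq : q.degLE k) (hq : G.qdepth = 0) (hfv : none ∈ G.fv → v = none) :
    (q.sat {d : D | G.Sat (e.updVar v d)}.ncard ↔
      q.sat {d : D' | G.Sat (e'.updVar v d)}.ncard) := by
  obtain ⟨hW1, hσ, hγ⟩ := hWF
  rw [count_decomp c hW1 hσ e hg v G hq hfv,
    count_decomp c hW1 hσ e' hg' v G hq hfv]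
  apply CQ.sat_congr hdq
  apply eqk_add (Or.inl rfl)
  apply eqk_sum
  intro τ hτ
  rw [List.mem_filter] at hτ
  have hB := (mem_extSigns_iff _ _ _).1 hτ.1
  exact eqk_of_sat (hγ τ) (hg.e3 τ hB) (hg'.e3 τ hB)

/-- The key transfer lemma: two models of the same counting-star formula agree
on all depth-≤1, degree-≤k formulas without free `none`. -/
lemma sat_iff_of_good {k : ℕ} (c : CSData 𝒜 ℱ n) (hWF : c.WF k)
    {D D' : Type} [Finite D] [Finite D']
    (e : Env 𝒜 ℱ (Option (Fin n)) D) (e' : Env 𝒜 ℱ (Option (Fin n)) D')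
    (hg : Good c e) (hg' : Good c e') :
    ∀ F : Fml 𝒜 ℱ (Option (Fin n)), F.qdepth ≤ 1 → F.DegLE k →
      (none : Option (Fin n)) ∉ F.fv → (F.Sat e ↔ F.Sat e') := by
  have hW1 : ∀ y, y ∉ c.xs → c.ι y ∈ c.xs := hWF.1
  have hatom : ∀ a : Atom 𝒜 ℱ (Option (Fin n)), none ∉ a.varset →
      ∀ (D₀ : Type) (e₀ : Env 𝒜 ℱ (Option (Fin n)) D₀), Good c e₀ →
      (a.toFml.Sat e₀ ↔ c.σ (a.rename (repc c)) = true) := by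
    intro a ha D₀ e₀ hg₀
    have hv : ∀ w ∈ a.varset, e₀.var (repc c w) = e₀.var w :=
      fun w _ => hg₀.var_repc w
    rw [← Atom.rename_sat a (repc c) e₀ e₀ rfl rfl hv]
    apply hg₀.e2
    intro x hx
    rw [Atom.rename_varset] at hx
    rcases Finset.mem_image.1 hx with ⟨w, hw, rfl⟩
    cases w with
    | none => exact absurd hw ha
    | some j => exact repc_mem_xsO c hW1 j
  intro F
  induction F with
  | un A w =>
      intro _ _ hfv
      rw [show (Fml.un A w).Sat e ↔ (Atom.un A w).toFml.Sat e from Iff.rfl,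
        show (Fml.un A w).Sat e' ↔ (Atom.un A w).toFml.Sat e' from Iff.rfl,
        hatom _ (by simpa [Atom.varset, Fml.fv] using hfv) D e hg,
        hatom _ (by simpa [Atom.varset, Fml.fv] using hfv) D' e' hg']
  | bin f w₁ w₂ =>
      intro _ _ hfv
      rw [show (Fml.bin f w₁ w₂).Sat e ↔ (Atom.bin f w₁ w₂).toFml.Sat e from Iff.rfl,
        show (Fml.bin f w₁ w₂).Sat e' ↔ (Atom.bin f w₁ w₂).toFml.Sat e' from Iff.rfl,
        hatom _ (by simpa [Atom.varset, Fml.fv] using hfv) D e hg,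
        hatom _ (by simpa [Atom.varset, Fml.fv] using hfv) D' e' hg']
  | eq w₁ w₂ =>
      intro _ _ hfv
      rw [show (Fml.eq w₁ w₂).Sat e ↔ (Atom.eq w₁ w₂).toFml.Sat e from Iff.rfl,
        show (Fml.eq w₁ w₂).Sat e' ↔ (Atom.eq w₁ w₂).toFml.Sat e' from Iff.rfl,
        hatom _ (by simpa [Atom.varset, Fml.fv] using hfv) D e hg,
        hatom _ (by simpa [Atom.varset, Fml.fv] using hfv) D' e' hg']
  | fls => intro _ _ _; simp [Fml.Sat]
  | and F G ihF ihG =>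
      intro hq hdeg hfv
      simp only [Fml.qdepth, max_le_iff] at hq
      rw [show (Fml.and F G).Sat e ↔ _ ∧ _ from Iff.rfl,
        show (Fml.and F G).Sat e' ↔ _ ∧ _ from Iff.rfl,
        ihF hq.1 hdeg.1 (fun h => hfv (by simp [Fml.fv, h])),
        ihG hq.2 hdeg.2 (fun h => hfv (by simp [Fml.fv, h]))]
  | or F G ihF ihG =>
      intro hq hdeg hfv
      simp only [Fml.qdepth, max_le_iff] at hq
      rw [show (Fml.or F G).Sat e ↔ _ ∨ _ from Iff.rfl,
        show (Fml.or F G).Sat e' ↔ _ ∨ _ from Iff.rfl,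
        ihF hq.1 hdeg.1 (fun h => hfv (by simp [Fml.fv, h])),
        ihG hq.2 hdeg.2 (fun h => hfv (by simp [Fml.fv, h]))]
  | not F ihF =>
      intro hq hdeg hfv
      rw [show (Fml.not F).Sat e ↔ ¬ _ from Iff.rfl,
        show (Fml.not F).Sat e' ↔ ¬ _ from Iff.rfl,
        ihF hq hdeg (fun h => hfv (by simpa [Fml.fv] using h))]
  | cnt q v G ihG =>
      intro hq hdeg hfv
      simp only [Fml.qdepth] at hq
      have hq0 : G.qdepth = 0 := by omega
      have hfv' : none ∈ G.fv → v = none := by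
        intro h
        by_contra hv
        exact hfv (by simp [Fml.fv, Finset.mem_erase, Ne.symm hv, h])
      exact cnt_core c hWF e e' hg hg' q v G hdeg.1 hq0 hfv'


section TypeOf

variable {D : Type}

/-- Minimal representative of the `=`-class of a variable. -/
noncomputable def minRep (e : Env 𝒜 ℱ (Option (Fin n)) D) (y : Fin n) : Fin n :=
  (Finset.univ.filter (fun j => e.var (some j) = e.var (some y))).min'
    ⟨y, by simp⟩

lemma minRep_var (e : Env 𝒜 ℱ (Option (Fin n)) D) (y : Fin n) :
    e.var (some (minRep e y)) = e.var (some y) := by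
  have := Finset.min'_mem
    (Finset.univ.filter (fun j => e.var (some j) = e.var (some y)))
    ⟨y, by simp⟩
  rw [Finset.mem_filter] at this
  exact this.2

lemma minRep_congr (e : Env 𝒜 ℱ (Option (Fin n)) D) {z y : Fin n}
    (h : e.var (some z) = e.var (some y)) : minRep e z = minRep e y := by
  unfold minRep
  congr 1
  ext j
  simp [h]

/-- The variable set of the type of `e`: minimal representatives. -/
noncomputable def typeXs (e : Env 𝒜 ℱ (Option (Fin n)) D) : Finset (Fin n) :=
  Finset.univ.filter (fun i => minRep e i = i)

lemma minRep_mem_typeXs (e : Env 𝒜 ℱ (Option (Fin n)) D) (y : Fin n) :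
    minRep e y ∈ typeXs e := by
  rw [typeXs, Finset.mem_filter]
  exact ⟨Finset.mem_univ _, minRep_congr e (minRep_var e y)⟩

lemma typeXs_inj (e : Env 𝒜 ℱ (Option (Fin n)) D) {i j : Fin n}
    (hi : i ∈ typeXs e) (hj : j ∈ typeXs e)
    (h : e.var (some i) = e.var (some j)) : i = j := by
  rw [typeXs, Finset.mem_filter] at hi hj
  rw [← hi.2, ← hj.2]
  exact minRep_congr e h

/-- Number of elements realizing the extension `τ`. -/
noncomputable def extCnt (xsO : Finset (Option (Fin n)))
    (e : Env 𝒜 ℱ (Option (Fin n)) D) (τ : Atom 𝒜 ℱ (Option (Fin n)) → Bool) : ℕ :=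
  {d | (extFml xsO none τ).Sat (e.updVar none d)}.ncard

/-- The counting-star type of an environment. -/
noncomputable def typeOf (k : ℕ) (e : Env 𝒜 ℱ (Option (Fin n)) D) : CSData 𝒜 ℱ n where
  xs := typeXs e
  ι := minRep e
  σ := fun a => decide (a.varset ⊆ (typeXs e).image (fun i => some i)) &&
        decide (a.toFml.Sat e)
  γ := fun τ =>
    if extCnt ((typeXs e).image (fun i => some i)) e τ ≤ k
    then .exact (extCnt ((typeXs e).image (fun i => some i)) e τ)
    else .atLeast (k+1)

lemma typeOf_xsO (k : ℕ) (e : Env 𝒜 ℱ (Option (Fin n)) D) :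
    (typeOf k e).xsO = (typeXs e).image (fun i => some i) := rfl

lemma typeOf_wf (e : Env 𝒜 ℱ (Option (Fin n)) D) (k : ℕ) : (typeOf k e).WF k := by
  refine ⟨?_, ?_, ?_⟩
  · intro y _
    exact minRep_mem_typeXs e y
  · apply gccatSignB_of
    · intro i hi j hj
      rw [typeOf_xsO] at hi hj
      rcases Finset.mem_image.1 hi with ⟨i', hi', rfl⟩
      rcases Finset.mem_image.1 hj with ⟨j', hj', rfl⟩
      show (decide _ && decide _) = _
      rw [decide_eq_true (show (Atom.eq (some i') (some j') :
          Atom 𝒜 ℱ (Option (Fin n))).varset ⊆ (typeXs e).image (fun i => some i) by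
        intro x hx
        rcases Finset.mem_insert.1 hx with rfl | hx'
        · exact Finset.mem_image_of_mem _ hi'
        · rw [Finset.mem_singleton] at hx'
          subst hx'
          exact Finset.mem_image_of_mem _ hj'), Bool.true_and]
      rw [Bool.eq_iff_iff, decide_eq_true_eq, decide_eq_true_eq]
      show e.var (some i') = e.var (some j') ↔ _
      constructor
      · intro h
        rw [typeXs_inj e hi' hj' h]
      · intro h
        rw [Option.some_inj.1 h]
    · intro a ha
      show (decide _ && decide _) = false
      rw [decide_eq_false
        (show ¬ a.varset ⊆ (typeXs e).image (fun i => some i) from ha), Bool.false_and]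
  · intro τ
    show CQ.degLE k (if _ then _ else _)
    split
    · assumption
    · rfl

lemma typeOf_good (e : Env 𝒜 ℱ (Option (Fin n)) D) (k : ℕ) : Good (typeOf k e) e := by
  refine ⟨?_, ?_, ?_⟩
  · intro y _
    exact (minRep_var e y).symm
  · intro a ha
    show _ ↔ (decide _ && decide _) = true
    rw [decide_eq_true
      (show a.varset ⊆ (typeXs e).image (fun i => some i) from ha),
      Bool.true_and, decide_eq_true_eq]
  · intro τ _
    show CQ.sat
      (if extCnt ((typeXs e).image (fun i => some i)) e τ ≤ k
        then CQ.exact (extCnt ((typeXs e).image (fun i => some i)) e τ)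
        else CQ.atLeast (k+1))
      (extCnt ((typeXs e).image (fun i => some i)) e τ)
    split
    · exact rfl
    · show k + 1 ≤ extCnt ((typeXs e).image (fun i => some i)) e τ
      omega

end TypeOf

lemma csFml_fv (c : CSData 𝒜 ℱ n) :
    (csFml c).fv = (Finset.univ : Finset (Fin n)).image (fun i => some i) := by
  ext x
  simp only [csFml, Fml.fv, Finset.mem_union, Finset.mem_image, Finset.mem_univ, true_and]
  constructor
  · rintro (h | h | h)
    · rcases (listConj_fv_mem _ _).1 h with ⟨F, hF, hx⟩
      rcases List.mem_map.1 hF with ⟨y, _, rfl⟩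
      simp only [Fml.fv, Finset.mem_insert, Finset.mem_singleton] at hx
      rcases hx with rfl | rfl
      · exact ⟨y, rfl⟩
      · exact ⟨c.ι y, rfl⟩
    · rw [gccatFml] at h
      rcases (signedConj_fv_mem _ _ _).1 h with ⟨a, ha, hx⟩
      have := (mem_atomsOn_iff _ _).1 ha hx
      rcases (mem_xsO_iff c x).1 this with ⟨i, _, rfl⟩
      exact ⟨i, rfl⟩
    · rcases (listConj_fv_mem _ _).1 h with ⟨F, hF, hx⟩
      rcases List.mem_map.1 hF with ⟨τ, _, rfl⟩
      simp only [Fml.fv, Finset.mem_erase] at hx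
      rw [extFml] at hx
      rcases (signedConj_fv_mem _ _ _).1 hx.2 with ⟨a, ha, hxa⟩
      have hext := (mem_extAtoms_iff _ _ _).1 ha
      have hsub := ((isExtAtom_iff _ _ _).1 hext).1 hxa
      rcases Finset.mem_insert.1 hsub with rfl | hmem
      · exact absurd rfl hx.1
      · rcases (mem_xsO_iff c x).1 hmem with ⟨i, _, rfl⟩
        exact ⟨i, rfl⟩
  · rintro ⟨i, rfl⟩
    by_cases hi : i ∈ c.xs
    · right; left
      rw [gccatFml]
      apply (signedConj_fv_mem _ _ _).2
      refine ⟨Atom.eq (some i) (some i), ?_, by simp [Atom.varset]⟩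
      rw [mem_atomsOn_iff]
      simp [Atom.varset, CSData.xsO, hi]
    · left
      apply (listConj_fv_mem _ _).2
      refine ⟨Fml.eq (some i) (some (c.ι i)), ?_, by simp [Fml.fv]⟩
      exact List.mem_map_of_mem (Finset.mem_toList.2 (by simp [hi]))

/-- Translation of a bounded counting quantifier index into `CQ`. -/
def cqOf (k : ℕ) (j : Fin (k+2)) : CQ :=
  if (j : ℕ) = k + 1 then .atLeast (k+1) else .exact j

lemma cqOf_lt (k m : ℕ) (h : m ≤ k) (hh : m < k + 2) :
    cqOf k ⟨m, hh⟩ = .exact m := by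
  rw [cqOf, if_neg]
  show ¬ m = k + 1
  omega

lemma cqOf_top (k : ℕ) (hh : k + 1 < k + 2) :
    cqOf k ⟨k + 1, hh⟩ = .atLeast (k+1) := by
  rw [cqOf, if_pos rfl]

lemma typeOf_γ {D : Type} (k : ℕ) (e : Env 𝒜 ℱ (Option (Fin n)) D) (τ) :
    (typeOf k e).γ τ =
      if extCnt ((typeXs e).image (fun i => some i)) e τ ≤ k
      then .exact (extCnt ((typeXs e).image (fun i => some i)) e τ)
      else .atLeast (k+1) := rfl

/-- All counting-star data of counting degree at most `k` (up to the values of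
`γ` that matter). -/
noncomputable def allCS (𝒜 ℱ : Type) [Fintype 𝒜] [DecidableEq 𝒜]
    [Fintype ℱ] [DecidableEq ℱ] (n k : ℕ) : List (CSData 𝒜 ℱ n) :=
  ((Finset.univ : Finset (Finset (Fin n) × (Fin n → Fin n) ×
      (Atom 𝒜 ℱ (Option (Fin n)) → Bool) ×
      ((Atom 𝒜 ℱ (Option (Fin n)) → Bool) → Fin (k+2)))).toList).map
    (fun q => ⟨q.1, q.2.1, q.2.2.1, fun τ => cqOf k (q.2.2.2 τ)⟩)

lemma typeOf_mem_allCS {D : Type} (e : Env 𝒜 ℱ (Option (Fin n)) D) (k : ℕ) :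
    typeOf k e ∈ allCS 𝒜 ℱ n k := by
  rw [allCS, List.mem_map]
  refine ⟨⟨typeXs e, minRep e, (typeOf k e).σ,
    fun τ => if h : extCnt ((typeXs e).image (fun i => some i)) e τ ≤ k
      then ⟨extCnt ((typeXs e).image (fun i => some i)) e τ, by omega⟩
      else ⟨k+1, by omega⟩⟩,
    Finset.mem_toList.2 (Finset.mem_univ _), ?_⟩
  have hγ : ∀ τ, cqOf k (if h : extCnt ((typeXs e).image (fun i => some i)) e τ ≤ k
      then (⟨extCnt ((typeXs e).image (fun i => some i)) e τ, by omega⟩ : Fin (k+2))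
      else ⟨k+1, by omega⟩) = (typeOf k e).γ τ := by
    intro τ
    by_cases h : extCnt ((typeXs e).image (fun i => some i)) e τ ≤ k
    · rw [dif_pos h, cqOf_lt k _ h, typeOf_γ, if_pos h]
    · rw [dif_neg h, cqOf_top, typeOf_γ, if_neg h]
  show CSData.mk (typeXs e) (minRep e) (typeOf k e).σ _ = typeOf k e
  have hrfl : typeOf k e =
      CSData.mk (typeXs e) (minRep e) (typeOf k e).σ (typeOf k e).γ := rfl
  rw [hrfl]
  exact congrArg (CSData.mk (typeXs e) (minRep e) (typeOf k e).σ) (funext hγ)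

end Core

end AuxDev
/-- **Depth-one normal form.** Let `F` be a first-order formula
with counting quantifiers, of quantifier depth at most one, of counting degree
at most `k`, with `FV(F) ⊆ {x₁,…,xₙ}`.  Then `F` is logically equivalent (over
all finite domains) to a finite disjunction of `k`-counting-star formulas
`F_C` with `FV(F_C) = {x₁,…,xₙ}`. -/
theorem depth_one_normal_form {𝒜 ℱ : Type}
    [Fintype 𝒜] [DecidableEq 𝒜] [Fintype ℱ] [DecidableEq ℱ] {n k : ℕ}
    (F : Fml 𝒜 ℱ (Option (Fin n)))
    (hfv : (none : Option (Fin n)) ∉ F.fv)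
    (hq : F.qdepth ≤ 1) (hdeg : F.DegLE k) :
    ∃ S : List (CSData 𝒜 ℱ n),
      (∀ c ∈ S, c.WF k ∧
        (csFml c).fv = (Finset.univ : Finset (Fin n)).image (fun i => some i)) ∧
      ∀ (D : Type) [Finite D] (e : Env 𝒜 ℱ (Option (Fin n)) D),
        F.Sat e ↔ ∃ c ∈ S, (csFml c).Sat e := by
  classical
  refine ⟨(allCS 𝒜 ℱ n k).filter (fun c => decide (c.WF k ∧
      (csFml c).fv = (Finset.univ : Finset (Fin n)).image (fun i => some i) ∧
      ∀ (D₀ : Type) (_ : Finite D₀) (e' : Env 𝒜 ℱ (Option (Fin n)) D₀),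
        (csFml c).Sat e' → F.Sat e')), ?_, ?_⟩
  · intro c hc
    rw [List.mem_filter] at hc
    have h := of_decide_eq_true hc.2
    exact ⟨h.1, h.2.1⟩
  · intro D hD e
    haveI := hD
    constructor
    · intro hFe
      refine ⟨typeOf k e, ?_, (csFml_sat_iff _ _).2 (typeOf_good e k)⟩
      rw [List.mem_filter]
      refine ⟨typeOf_mem_allCS e k, decide_eq_true ?_⟩
      refine ⟨typeOf_wf e k, csFml_fv _, ?_⟩
      intro D' hD' e' he'
      haveI := hD'
      have hg' := (csFml_sat_iff _ _).1 he'
      exact (sat_iff_of_good (typeOf k e) (typeOf_wf e k) e e' (typeOf_good e k) hg'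
        F hq hdeg hfv).1 hFe
    · rintro ⟨c, hc, hsat⟩
      rw [List.mem_filter] at hc
      exact (of_decide_eq_true hc.2).2.2 D hD e hsat
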